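/- arXiv:1005.5673 — 3 statements merged into one kernel-verified Lean document; each statement's English description precedes it below -/
import Mathlib

section
/- Let (Ω,d,μ) be a metric probability space satisfying Conditions 1' and 2, let 1 ≤ q < ∞, and let f ∈ Lip(Ω) ∩ L¹(Ω) with ∫_Ω |∇f|^q dμ < ∞. Then the function Ψ(t) = ∫_{{x:|f(x)| > f*_μ(t)}} |∇f(x)|^q dμ(x) is locally absolutely continuous on (0,1). -/
open MeasureTheory Set Filter Topology
open scoped ENNReal NNReal

noncomputable section

/-- The distribution function `μ_f(t) = μ{x : |f x| > t}` (as a real number). -/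
def distrib {α : Type*} [MeasurableSpace α] (μ : Measure α) (f : α → ℝ) (t : ℝ) : ℝ :=
  (μ {x | t < |f x|}).toReal

/-- The decreasing rearrangement `f*_μ(s) = inf{t ≥ 0 : μ_f(t) ≤ s}`. -/
def rearr {α : Type*} [MeasurableSpace α] (μ : Measure α) (f : α → ℝ) (s : ℝ) : ℝ :=
  sInf {t : ℝ | 0 ≤ t ∧ distrib μ f t ≤ s}

/-- The maximal function `f**_μ(t) = (1/t) ∫₀ᵗ f*_μ(s) ds`. -/
def rearr2 {α : Type*} [MeasurableSpace α] (μ : Measure α) (f : α → ℝ) (t : ℝ) : ℝ :=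
  (1 / t) * ∫ s in (0:ℝ)..t, rearr μ f s

/-- The modulus of the gradient `|∇f|(x) = limsup_{d(x,y)→0} |f x - f y| / d(x,y)`. -/
def gradMod {Ω : Type*} [MetricSpace Ω] (f : Ω → ℝ) (x : Ω) : ℝ :=
  limsup (fun y => |f x - f y| / dist x y) (𝓝[≠] x)

/-- The Minkowski content `μ⁺(A) = liminf_{h→0⁺} (μ(A_h) - μ(A))/h`. -/
def minkContent {Ω : Type*} [MetricSpace Ω] [MeasurableSpace Ω] (μ : Measure Ω)
    (A : Set Ω) : ℝ :=
  liminf (fun h => ((μ (Metric.thickening h A)).toReal - (μ A).toReal) / h) (𝓝[>] 0)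

/-- The isoperimetric profile: the (pointwise maximal) function with
`μ⁺(A) ≥ I(μ(A))` for all Borel sets `A`. -/
def isoProfile {Ω : Type*} [MetricSpace Ω] [MeasurableSpace Ω] (μ : Measure Ω) (t : ℝ) : ℝ :=
  sInf (minkContent μ '' {A : Set Ω | MeasurableSet A ∧ (μ A).toReal = t})

/-- Condition 1': the isoperimetric profile is continuous, positive on `(0,1)`,
and vanishes at `0`. -/
def Condition1' {Ω : Type*} [MetricSpace Ω] [MeasurableSpace Ω] (μ : Measure Ω) : Prop :=
  ContinuousOn (isoProfile μ) (Icc 0 1) ∧ (∀ t ∈ Ioo (0:ℝ) 1, 0 < isoProfile μ t) ∧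
    isoProfile μ 0 = 0

/-- Condition 2: for Lipschitz `f` and every `c`, `|∇f| = 0` μ-a.e. on `{f = c}`. -/
def Condition2 {Ω : Type*} [MetricSpace Ω] [MeasurableSpace Ω] (μ : Measure Ω) : Prop :=
  ∀ f : Ω → ℝ, (∃ K, LipschitzWith K f) → ∀ c : ℝ,
    ∀ᵐ x ∂(μ.restrict {x | f x = c}), gradMod f x = 0

/-- The weights `w_q` built from the isoperimetric profile. -/
def wq (I : ℝ → ℝ) (q t : ℝ) : ℝ :=
  if q = 1 then sInf ((fun s => I s / s) '' Ioo 0 t)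
  else ((1 / t) * ∫ s in (0:ℝ)..t, (s / I s) ^ (q / (q - 1))) ^ ((1 - q) / q)

/-- Local absolute continuity on `(0,1)`. -/
def LocAbsContOn01 (g : ℝ → ℝ) : Prop :=
  ∀ a b : ℝ, 0 < a → a < b → b < 1 → ∀ ε > 0, ∃ δ > 0,
    ∀ (n : ℕ) (c d : Fin n → ℝ),
      (∀ k, a ≤ c k ∧ c k ≤ d k ∧ d k ≤ b) →
      (Pairwise fun j k => Ioo (c j) (d j) ∩ Ioo (c k) (d k) = ∅) →
      (∑ k, (d k - c k)) ≤ δ → (∑ k, |g (d k) - g (c k)|) ≤ ε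

section Helpers

variable {Ω : Type*} [MetricSpace Ω] [MeasurableSpace Ω] [BorelSpace Ω]
  (μ : Measure Ω) [IsProbabilityMeasure μ] {f : Ω → ℝ}

lemma measSetGt (hf : Continuous f) (t : ℝ) : MeasurableSet {x | t < |f x|} :=
  measurableSet_lt measurable_const hf.measurable.abs

lemma measSetGe (hf : Continuous f) (t : ℝ) : MeasurableSet {x | t ≤ |f x|} :=
  measurableSet_le measurable_const hf.measurable.abs

lemma rearrSet_bddBelow (s : ℝ) : BddBelow {t : ℝ | 0 ≤ t ∧ distrib μ f t ≤ s} :=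
  ⟨0, fun _ ht => ht.1⟩

lemma rearrSet_nonempty (hf : Continuous f) {s : ℝ} (hs : 0 < s) :
    {t : ℝ | 0 ≤ t ∧ distrib μ f t ≤ s}.Nonempty := by
  have hanti : Antitone (fun n : ℕ => {x : Ω | (n : ℝ) < |f x|}) := by
    intro m n hmn x hx
    simp only [mem_setOf_eq] at *
    exact lt_of_le_of_lt (by exact_mod_cast hmn) hx
  have hEmpty : ⋂ n : ℕ, {x : Ω | (n : ℝ) < |f x|} = ∅ := by
    ext x
    simp only [mem_iInter, mem_setOf_eq, mem_empty_iff_false, iff_false, not_forall, not_lt]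
    exact ⟨⌈|f x|⌉₊, Nat.le_ceil _⟩
  have htend := tendsto_measure_iInter_atTop (μ := μ)
    (s := fun n : ℕ => {x : Ω | (n : ℝ) < |f x|})
    (fun n => (measSetGt hf (n : ℝ)).nullMeasurableSet) hanti ⟨0, measure_ne_top μ _⟩
  rw [hEmpty, measure_empty] at htend
  have hev : ∀ᶠ n : ℕ in atTop, μ {x : Ω | (n : ℝ) < |f x|} < ENNReal.ofReal s :=
    htend.eventually (Iio_mem_nhds (ENNReal.ofReal_pos.mpr hs))
  obtain ⟨n, hn⟩ := hev.exists
  exact ⟨n, n.cast_nonneg, ENNReal.toReal_le_of_le_ofReal hs.le hn.le⟩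

lemma rearr_nonneg (hf : Continuous f) {s : ℝ} (hs : 0 < s) : 0 ≤ rearr μ f s :=
  le_csInf (rearrSet_nonempty μ hf hs) fun _ ht => ht.1

lemma rearr_anti (hf : Continuous f) {s t : ℝ} (hs : 0 < s) (hst : s ≤ t) :
    rearr μ f t ≤ rearr μ f s :=
  csInf_le_csInf (rearrSet_bddBelow μ t) (rearrSet_nonempty μ hf hs)
    fun u hu => ⟨hu.1, hu.2.trans hst⟩

lemma measure_gt_rearr_le (hf : Continuous f) {s : ℝ} (hs : 0 < s) :
    μ {x | rearr μ f s < |f x|} ≤ ENNReal.ofReal s := by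
  set r := rearr μ f s with hr
  have hne := rearrSet_nonempty μ hf hs
  have hU : {x : Ω | r < |f x|} = ⋃ n : ℕ, {x : Ω | r + 1 / ((n : ℝ) + 1) < |f x|} := by
    ext x
    simp only [mem_setOf_eq, mem_iUnion]
    constructor
    · intro hx
      obtain ⟨n, hn⟩ := exists_nat_one_div_lt (sub_pos.mpr hx)
      exact ⟨n, by linarith⟩
    · rintro ⟨n, hn⟩
      have : 0 < 1 / ((n : ℝ) + 1) := by positivity
      linarith
  have hmono : Monotone (fun n : ℕ => {x : Ω | r + 1 / ((n : ℝ) + 1) < |f x|}) := by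
    intro m n hmn x hx
    simp only [mem_setOf_eq] at *
    have h1 : 1 / ((n : ℝ) + 1) ≤ 1 / ((m : ℝ) + 1) := by
      apply one_div_le_one_div_of_le (by positivity)
      exact_mod_cast Nat.add_le_add_right hmn 1
    linarith
  rw [hU, hmono.measure_iUnion]
  refine iSup_le fun n => ?_
  have hlt : sInf {t : ℝ | 0 ≤ t ∧ distrib μ f t ≤ s} < r + 1 / ((n : ℝ) + 1) := by
    have : 0 < 1 / ((n : ℝ) + 1) := by positivity
    have : r = sInf {t : ℝ | 0 ≤ t ∧ distrib μ f t ≤ s} := hr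
    linarith
  obtain ⟨t, ht, htlt⟩ := (csInf_lt_iff (rearrSet_bddBelow μ s) hne).mp hlt
  calc μ {x : Ω | r + 1 / ((n : ℝ) + 1) < |f x|}
      ≤ μ {x : Ω | t < |f x|} := measure_mono fun x hx => htlt.trans hx
    _ ≤ ENNReal.ofReal s := by
        rw [← ENNReal.ofReal_toReal (measure_ne_top μ {x : Ω | t < |f x|})]
        exact ENNReal.ofReal_le_ofReal ht.2

lemma ofReal_le_measure_ge_rearr (hf : Continuous f) {s : ℝ} (hs : 0 < s) (hs1 : s ≤ 1) :
    ENNReal.ofReal s ≤ μ {x | rearr μ f s ≤ |f x|} := by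
  set r := rearr μ f s with hr
  have hr0 : 0 ≤ r := rearr_nonneg μ hf hs
  rcases eq_or_lt_of_le hr0 with h0 | hpos
  · have huniv : {x : Ω | r ≤ |f x|} = univ := by
      ext x; simp [← h0, abs_nonneg]
    rw [huniv, measure_univ]
    exact ENNReal.ofReal_le_one.mpr hs1
  · have hIinter : {x : Ω | r ≤ |f x|} = ⋂ n : ℕ, {x : Ω | r - r / ((n : ℝ) + 1) < |f x|} := by
      ext x
      simp only [mem_setOf_eq, mem_iInter]
      constructor
      · intro hx n
        have : 0 < r / ((n : ℝ) + 1) := by positivity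
        linarith
      · intro hx
        by_contra hcon
        push_neg at hcon
        obtain ⟨n, hn⟩ := exists_nat_one_div_lt (div_pos (sub_pos.mpr hcon) hpos)
        have hn' : r / ((n : ℝ) + 1) < r - |f x| := by
          rw [div_lt_iff₀ (by positivity : (0:ℝ) < (n : ℝ) + 1)]
          rw [div_lt_div_iff₀ (by positivity : (0:ℝ) < (n : ℝ) + 1) hpos] at hn
          linarith
        have := hx n
        linarith
    rw [hIinter]
    have hanti : Antitone (fun n : ℕ => {x : Ω | r - r / ((n : ℝ) + 1) < |f x|}) := by
      intro m n hmn x hx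
      simp only [mem_setOf_eq] at *
      have h1 : r / ((n : ℝ) + 1) ≤ r / ((m : ℝ) + 1) := by
        apply div_le_div_of_nonneg_left hpos.le (by positivity)
        exact_mod_cast Nat.add_le_add_right hmn 1
      linarith
    rw [hanti.measure_iInter (fun n => (measSetGt hf _).nullMeasurableSet)
      ⟨0, measure_ne_top μ _⟩]
    refine le_iInf fun n => ?_
    set t := r - r / ((n : ℝ) + 1) with ht
    have ht0 : 0 ≤ t := by
      rw [ht, sub_nonneg]
      rw [div_le_iff₀ (by positivity : (0:ℝ) < (n : ℝ) + 1)]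
      nlinarith [hpos.le, Nat.cast_nonneg (α := ℝ) n]
    have htr : t < r := by
      have : 0 < r / ((n : ℝ) + 1) := by positivity
      rw [ht]; linarith
    have hnotin : t ∉ {u : ℝ | 0 ≤ u ∧ distrib μ f u ≤ s} := fun hmem =>
      absurd (csInf_le (rearrSet_bddBelow μ s) hmem) (not_le.mpr htr)
    have hds : s < distrib μ f t := by
      by_contra hle
      exact hnotin ⟨ht0, not_lt.mp hle⟩
    rw [distrib] at hds
    calc ENNReal.ofReal s ≤ ENNReal.ofReal ((μ {x : Ω | t < |f x|}).toReal) :=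
          ENNReal.ofReal_le_ofReal hds.le
      _ = μ {x : Ω | t < |f x|} := ENNReal.ofReal_toReal (measure_ne_top μ _)

end Helpers

/-- Under Conditions 1' and 2, if `f ∈ Lip(Ω) ∩ L¹(Ω)` with
`∫ |∇f|^q dμ < ∞`, the function `Ψ(t) = ∫_{{|f| > f*_μ(t)}} |∇f|^q dμ` is locally
absolutely continuous on `(0,1)`. -/
theorem psi_locally_absolutely_continuous
    {Ω : Type*} [MetricSpace Ω] [ConnectedSpace Ω] [TopologicalSpace.SeparableSpace Ω]
    [MeasurableSpace Ω] [BorelSpace Ω] (μ : Measure Ω) [IsProbabilityMeasure μ] [NullSingletonClass μ]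
    (h1 : Condition1' μ) (h2 : Condition2 μ) (q : ℝ) (hq : 1 ≤ q)
    (f : Ω → ℝ) (hfLip : ∃ K, LipschitzWith K f) (hfL1 : Integrable f μ)
    (hgrad : Integrable (fun x => |gradMod f x| ^ q) μ) :
    LocAbsContOn01 (fun t => ∫ x in {x | rearr μ f t < |f x|}, |gradMod f x| ^ q ∂μ) := by
  obtain ⟨K, hK⟩ := hfLip
  have hfC : Continuous f := hK.continuous
  set g : Ω → ℝ := fun x => |gradMod f x| ^ q with hgdef
  have hg0 : ∀ x, 0 ≤ g x := fun x => Real.rpow_nonneg (abs_nonneg _) q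
  have hq0 : q ≠ 0 := (lt_of_lt_of_le one_pos hq).ne'
  intro a b ha hab hb1 ε hε
  obtain ⟨δ', hδ'pos, hδ'⟩ := exists_pos_setLIntegral_lt_of_measure_lt
      (μ := μ) (f := fun x => ENNReal.ofReal (g x)) hgrad.lintegral_lt_top.ne
      (ε := ENNReal.ofReal ε) (ENNReal.ofReal_pos.mpr hε).ne'
  obtain ⟨δ, hδpos, hδlt⟩ : ∃ δ : ℝ, 0 < δ ∧ ENNReal.ofReal δ < δ' := by
    rcases eq_or_ne δ' ⊤ with h | h
    · exact ⟨1, one_pos, by simp [h]⟩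
    · have ht : 0 < δ'.toReal := ENNReal.toReal_pos hδ'pos.ne' h
      refine ⟨δ'.toReal / 2, by positivity, ?_⟩
      calc ENNReal.ofReal (δ'.toReal / 2) < ENNReal.ofReal δ'.toReal :=
            (ENNReal.ofReal_lt_ofReal_iff ht).mpr (by linarith)
        _ = δ' := ENNReal.ofReal_toReal h
  refine ⟨δ, hδpos, ?_⟩
  intro n c d hcd hdisj hsum
  have hc : ∀ k, 0 < c k := fun k => lt_of_lt_of_le ha (hcd k).1
  have hd : ∀ k, 0 < d k := fun k => lt_of_lt_of_le (hc k) (hcd k).2.1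
  have hc1 : ∀ k, c k ≤ 1 := fun k =>
    ((hcd k).2.1.trans (hcd k).2.2).trans hb1.le
  have hrle : ∀ k, rearr μ f (d k) ≤ rearr μ f (c k) :=
    fun k => rearr_anti μ hfC (hc k) (hcd k).2.1
  set A : Fin n → Set Ω := fun k => {x | rearr μ f (d k) < |f x|} with hA
  set Ac : Fin n → Set Ω := fun k => {x | rearr μ f (c k) < |f x|} with hAc
  set B : Fin n → Set Ω := fun k => {x | rearr μ f (c k) ≤ |f x|} with hB
  set S : Fin n → Set Ω := fun k => A k \ B k with hS
  set D : Fin n → Set Ω := fun k => (A k \ Ac k) ∩ B k with hD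
  have hmA : ∀ k, MeasurableSet (A k) := fun k => measSetGt hfC _
  have hmAc : ∀ k, MeasurableSet (Ac k) := fun k => measSetGt hfC _
  have hmB : ∀ k, MeasurableSet (B k) := fun k => measSetGe hfC _
  have hmS : ∀ k, MeasurableSet (S k) := fun k => (hmA k).diff (hmB k)
  have hmD : ∀ k, MeasurableSet (D k) := fun k => ((hmA k).diff (hmAc k)).inter (hmB k)
  have hAcA : ∀ k, Ac k ⊆ A k := fun k x hx => lt_of_le_of_lt (hrle k) hx
  have hAcB : ∀ k, Ac k ⊆ B k := fun k x hx => show rearr μ f (c k) ≤ |f x| from le_of_lt hx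
  have hSempty : ∀ k, rearr μ f (d k) = rearr μ f (c k) → S k = ∅ := by
    intro k hk
    apply eq_empty_iff_forall_notMem.mpr
    rintro x ⟨hxA, hxB⟩
    have hxA' : rearr μ f (d k) < |f x| := hxA
    rw [hk] at hxA'
    exact hxB (le_of_lt hxA')
  have hμS : ∀ k, μ (S k) ≤ ENNReal.ofReal (d k - c k) := by
    intro k
    rcases eq_or_lt_of_le (hrle k) with heq | hlt
    · rw [hSempty k heq, measure_empty]; exact zero_le
    · have hBA : B k ⊆ A k := fun x hx => lt_of_lt_of_le hlt hx
      rw [hS]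
      rw [measure_diff hBA (hmB k).nullMeasurableSet (measure_ne_top μ _)]
      calc μ (A k) - μ (B k)
          ≤ ENNReal.ofReal (d k) - ENNReal.ofReal (c k) :=
            tsub_le_tsub (measure_gt_rearr_le μ hfC (hd k))
              (ofReal_le_measure_ge_rearr μ hfC (hc k) (hc1 k))
        _ = ENNReal.ofReal (d k - c k) := (ENNReal.ofReal_sub _ (hc k).le).symm
  have hDzero : ∀ k, ∀ᵐ x ∂μ, x ∈ D k → g x = 0 := by
    intro k
    set v := rearr μ f (c k) with hv
    have hmv : MeasurableSet {x : Ω | f x = v} :=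
      hfC.measurable (measurableSet_singleton v)
    have hmv' : MeasurableSet {x : Ω | f x = -v} :=
      hfC.measurable (measurableSet_singleton (-v))
    have h2p : ∀ᵐ x ∂μ, x ∈ {x : Ω | f x = v} → gradMod f x = 0 :=
      (ae_restrict_iff' hmv).mp (h2 f ⟨K, hK⟩ v)
    have h2m : ∀ᵐ x ∂μ, x ∈ {x : Ω | f x = -v} → gradMod f x = 0 :=
      (ae_restrict_iff' hmv').mp (h2 f ⟨K, hK⟩ (-v))
    filter_upwards [h2p, h2m] with x hp hm hxD
    have habs : |f x| = v := le_antisymm (not_lt.mp hxD.1.2) hxD.2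
    have h0 : gradMod f x = 0 := by
      rcases (abs_eq (rearr_nonneg μ hfC (hc k))).mp habs with h | h
      · exact hp h
      · exact hm h
    simp [hgdef, h0, Real.zero_rpow hq0]
  have hintS : ∀ s : Set Ω, IntegrableOn g s μ := fun s => hgrad.integrableOn
  have hsplit : ∀ k, A k \ Ac k = S k ∪ D k := by
    intro k
    ext x
    constructor
    · intro hx
      by_cases hxB : x ∈ B k
      · exact Or.inr ⟨hx, hxB⟩
      · exact Or.inl ⟨hx.1, hxB⟩
    · rintro (⟨hxA, hxB⟩ | ⟨hx, _⟩)
      · exact ⟨hxA, fun hxAc => hxB (hAcB k hxAc)⟩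
      · exact hx
  have hSD : ∀ k, Disjoint (S k) (D k) := by
    intro k
    rw [Set.disjoint_left]
    rintro x ⟨_, hxB⟩ ⟨_, hxB'⟩
    exact hxB hxB'
  have hdiffeq : ∀ k,
      (∫ x in A k, g x ∂μ) - (∫ x in Ac k, g x ∂μ) = ∫ x in S k, g x ∂μ := by
    intro k
    have h1 : ∫ x in A k \ Ac k, g x ∂μ
        = (∫ x in A k, g x ∂μ) - (∫ x in Ac k, g x ∂μ) :=
      integral_diff (hmAc k) (hintS (A k)) (hAcA k)
    have h2' : ∫ x in A k \ Ac k, g x ∂μ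
        = (∫ x in S k, g x ∂μ) + (∫ x in D k, g x ∂μ) := by
      rw [hsplit k]
      exact setIntegral_union (hSD k) (hmD k) (hintS _) (hintS _)
    have h3 : ∫ x in D k, g x ∂μ = 0 :=
      setIntegral_eq_zero_of_ae_eq_zero (hDzero k)
    rw [h3, add_zero] at h2'
    rw [← h1, h2']
  have hterm : ∀ k,
      |(∫ x in {x | rearr μ f (d k) < |f x|}, g x ∂μ)
        - (∫ x in {x | rearr μ f (c k) < |f x|}, g x ∂μ)|
      = ∫ x in S k, g x ∂μ := by
    intro k
    have : (∫ x in A k, g x ∂μ) - (∫ x in Ac k, g x ∂μ) = ∫ x in S k, g x ∂μ := hdiffeq k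
    rw [hA, hAc] at this
    simp only at this
    rw [this]
    exact abs_of_nonneg (setIntegral_nonneg (hmS k) fun x _ => hg0 x)
  -- pairwise AE-disjointness of the S k
  have hSdisj : Pairwise (Function.onFun (AEDisjoint μ) S) := by
    intro j k hjk
    have key : S j ∩ S k = ∅ ∨ S j = ∅ ∨ S k = ∅ := by
      rcases eq_or_lt_of_le (hrle j) with hej | hltj
      · exact Or.inr (Or.inl (hSempty j hej))
      rcases eq_or_lt_of_le (hrle k) with hek | hltk
      · exact Or.inr (Or.inr (hSempty k hek))
      -- both strict, hence c < d for both
      have hcdj : c j < d j := by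
        rcases eq_or_lt_of_le (hcd j).2.1 with h | h
        · exact absurd (by rw [h]) (ne_of_lt hltj)
        · exact h
      have hcdk : c k < d k := by
        rcases eq_or_lt_of_le (hcd k).2.1 with h | h
        · exact absurd (by rw [h]) (ne_of_lt hltk)
        · exact h
      have horder : d j ≤ c k ∨ d k ≤ c j := by
        by_contra hcon
        push_neg at hcon
        obtain ⟨h1, h2'⟩ := hcon
        set t := (max (c j) (c k) + min (d j) (d k)) / 2 with htdef
        have hmaxmin : max (c j) (c k) < min (d j) (d k) :=
          max_lt (lt_min hcdj h2') (lt_min h1 hcdk)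
        have ht1 : max (c j) (c k) < t := by rw [htdef]; linarith
        have ht2 : t < min (d j) (d k) := by rw [htdef]; linarith
        have hmem : t ∈ Ioo (c j) (d j) ∩ Ioo (c k) (d k) :=
          ⟨⟨lt_of_le_of_lt (le_max_left _ _) ht1, lt_of_lt_of_le ht2 (min_le_left _ _)⟩,
           ⟨lt_of_le_of_lt (le_max_right _ _) ht1, lt_of_lt_of_le ht2 (min_le_right _ _)⟩⟩
        rw [hdisj hjk] at hmem
        exact hmem
      left
      apply eq_empty_iff_forall_notMem.mpr
      rintro x ⟨⟨hxAj, hxBj⟩, ⟨hxAk, hxBk⟩⟩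
      rcases horder with h | h
      · have : rearr μ f (c k) ≤ rearr μ f (d j) := rearr_anti μ hfC (hd j) h
        exact hxBk (le_of_lt (lt_of_le_of_lt this hxAj))
      · have : rearr μ f (c j) ≤ rearr μ f (d k) := rearr_anti μ hfC (hd k) h
        exact hxBj (le_of_lt (lt_of_le_of_lt this hxAk))
    rcases key with h | h | h
    · show μ (S j ∩ S k) = 0
      rw [h, measure_empty]
    · show μ (S j ∩ S k) = 0
      exact measure_mono_null inter_subset_left (by rw [h]; exact measure_empty)
    · show μ (S j ∩ S k) = 0
      exact measure_mono_null inter_subset_right (by rw [h]; exact measure_empty)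
  have hiUnion : ∫ x in ⋃ k, S k, g x ∂μ = ∑ k, ∫ x in S k, g x ∂μ := by
    rw [integral_iUnion_ae (fun k => (hmS k).nullMeasurableSet) hSdisj (hintS _)]
    exact tsum_fintype _
  have hμU : μ (⋃ k, S k) < δ' := by
    calc μ (⋃ k, S k) ≤ ∑' k, μ (S k) := measure_iUnion_le _
      _ = ∑ k, μ (S k) := tsum_fintype _
      _ ≤ ∑ k, ENNReal.ofReal (d k - c k) := Finset.sum_le_sum fun k _ => hμS k
      _ = ENNReal.ofReal (∑ k, (d k - c k)) :=
          (ENNReal.ofReal_sum_of_nonneg fun k _ => sub_nonneg.mpr (hcd k).2.1).symm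
      _ ≤ ENNReal.ofReal δ := ENNReal.ofReal_le_ofReal hsum
      _ < δ' := hδlt
  have hlint : ∫⁻ x in ⋃ k, S k, ENNReal.ofReal (g x) ∂μ < ENNReal.ofReal ε := hδ' _ hμU
  have hUeq : ∫ x in ⋃ k, S k, g x ∂μ
      = (∫⁻ x in ⋃ k, S k, ENNReal.ofReal (g x) ∂μ).toReal :=
    integral_eq_lintegral_of_nonneg_ae (Eventually.of_forall hg0) hgrad.1.restrict
  simp only
  calc (∑ k, |(∫ x in {x | rearr μ f (d k) < |f x|}, g x ∂μ)
        - (∫ x in {x | rearr μ f (c k) < |f x|}, g x ∂μ)|)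
      = ∑ k, ∫ x in S k, g x ∂μ := Finset.sum_congr rfl fun k _ => hterm k
    _ = ∫ x in ⋃ k, S k, g x ∂μ := hiUnion.symm
    _ = (∫⁻ x in ⋃ k, S k, ENNReal.ofReal (g x) ∂μ).toReal := hUeq
    _ ≤ ε := ENNReal.toReal_le_of_le_ofReal hε.le hlint.le
end
end

section
/- Let n ≥ 1 and let X(ℝⁿ) be a rearrangement-invariant space. Suppose there exists c > 0 such that φ_X(m(A)) ≤ c·m⁺(A) for every Borel set A ⊂ ℝⁿ with m(A) < ∞. Then for every f ∈ Lip₀(ℝⁿ): ∫₀^∞ φ_X(m_f(t)) dt ≤ c ∫_{ℝⁿ} |∇f(x)| dx. -/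
open MeasureTheory Set Filter Topology
open scoped ENNReal NNReal

noncomputable section

/-- An abstract rearrangement-invariant (Banach function) norm over a measure `ν` on `ℝ`
(the representation measure, e.g. Lebesgue measure on `(0,1)` or on `(0,∞)`). -/
structure RINorm (ν : Measure ℝ) where
  /-- the norm functional (with value `∞` allowed) -/
  ρ : (ℝ → ℝ) → ℝ≥0∞
  /-- lattice monotonicity -/
  mono : ∀ g h : ℝ → ℝ, (∀ᵐ s ∂ν, |g s| ≤ |h s|) → ρ g ≤ ρ h
  /-- triangle inequality -/
  add_le : ∀ g h : ℝ → ℝ, ρ (g + h) ≤ ρ g + ρ h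
  /-- homogeneity -/
  smul : ∀ (c : ℝ) (g : ℝ → ℝ), ρ (fun s => c * g s) = ENNReal.ofReal |c| * ρ g
  /-- rearrangement invariance: equimeasurable functions have the same norm -/
  ri : ∀ g h : ℝ → ℝ, (∀ t, 0 < t → ν {s | t < |g s|} = ν {s | t < |h s|}) → ρ g = ρ h

/-- Lebesgue measure on `(0,1)`: representation measure for r.i. spaces over a
probability space. -/
def m01 : Measure ℝ := volume.restrict (Ioo 0 1)

namespace RINorm

variable {ν : Measure ℝ}

/-- The norm of a function `f : α → ℝ` in the r.i. space `X(α,μ)` represented by `X`: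
`‖f‖_X = ‖f*_μ‖_{X̄}`. -/
def normFn {α : Type*} [MeasurableSpace α] (X : RINorm ν) (μ : Measure α) (f : α → ℝ) :
    ℝ≥0∞ :=
  X.ρ (rearr μ f)

/-- The norm of `g : ℝ → ℝ` in the representation space `\overline{X^{(q)}}` of the
`q`-convexification: `‖g‖ = ‖|g|^q‖_{X̄}^{1/q}`. -/
def barQ (X : RINorm ν) (q : ℝ) (g : ℝ → ℝ) : ℝ≥0∞ :=
  (X.ρ fun s => |g s| ^ q) ^ (1 / q)

/-- The norm of `f : α → ℝ` in the `q`-convexification `X^{(q)}`: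
`‖f‖_{X^{(q)}} = ‖|f|^q‖_X^{1/q}`. -/
def normQ {α : Type*} [MeasurableSpace α] (X : RINorm ν) (q : ℝ) (μ : Measure α)
    (f : α → ℝ) : ℝ≥0∞ :=
  (X.ρ (rearr μ fun x => |f x| ^ q)) ^ (1 / q)

/-- The dilation operator `E_s f(t) = f*(t/s)` for `0 < t < min(1,s)`, `0` otherwise. -/
def dilate (ν : Measure ℝ) (s : ℝ) (g : ℝ → ℝ) (t : ℝ) : ℝ :=
  if 0 < t ∧ t < min 1 s then rearr ν g (t / s) else 0

/-- The norm `h_X(s)` of the dilation operator `E_s` on `X̄`. -/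
def dilNorm (X : RINorm ν) (s : ℝ) : ℝ≥0∞ :=
  ⨆ (g : ℝ → ℝ) (_ : X.ρ g ≤ 1), X.ρ (dilate ν s g)

/-- The upper Boyd index `ᾱ_X = inf_{s>1} ln h_X(s) / ln s`. -/
def boydUpper (X : RINorm ν) : ℝ :=
  sInf ((fun s => Real.log (X.dilNorm s).toReal / Real.log s) '' Ioi 1)

/-- The lower Boyd index `α_X = sup_{0<s<1} ln h_X(s) / ln s`. -/
def boydLower (X : RINorm ν) : ℝ :=
  sSup ((fun s => Real.log (X.dilNorm s).toReal / Real.log s) '' Ioo 0 1)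

/-- The fundamental function `φ_X(t) = ‖χ_A‖_X` for `μ(A) = t` (computed in the
representation space as the norm of `χ_{(0,t)}`). -/
def fund (X : RINorm ν) (t : ℝ) : ℝ≥0∞ :=
  X.ρ (indicator (Ioo 0 t) fun _ => (1:ℝ))

end RINorm


/-- Supremum of `u` over the open ball of radius `h` around `x`. -/
def ballSup {E : Type*} [NormedAddCommGroup E] (u : E → ℝ) (h : ℝ) (x : E) : ℝ :=
  sSup (u '' Metric.ball x h)

section BallSup

variable {E : Type*} [NormedAddCommGroup E] {u : E → ℝ} {K : ℝ≥0} {h : ℝ}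

lemma bddAbove_image_ball (hu : LipschitzWith K u) (x : E) :
    BddAbove (u '' Metric.ball x h) := by
  refine ⟨u x + K * h, ?_⟩
  rintro - ⟨y, hy, rfl⟩
  have h1 : |u y - u x| ≤ K * dist y x := by
    simpa [Real.dist_eq] using hu.dist_le_mul y x
  have h2 : dist y x < h := Metric.mem_ball.1 hy
  nlinarith [abs_le.1 h1, K.coe_nonneg]

lemma le_ballSup (hu : LipschitzWith K u) (hh : 0 < h) (x : E) : u x ≤ ballSup u h x :=
  le_csSup (bddAbove_image_ball hu x) ⟨x, Metric.mem_ball_self hh, rfl⟩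

lemma ballSup_le (hh : 0 < h) {x : E} {M : ℝ} (hM : ∀ y ∈ Metric.ball x h, u y ≤ M) :
    ballSup u h x ≤ M := by
  refine csSup_le (Set.Nonempty.image _ ⟨x, Metric.mem_ball_self hh⟩) ?_
  rintro - ⟨y, hy, rfl⟩; exact hM y hy

lemma ballSup_sub_le (hu : LipschitzWith K u) (hh : 0 < h) (x : E) :
    ballSup u h x - u x ≤ K * h := by
  rw [sub_le_iff_le_add]
  refine ballSup_le hh fun y hy => ?_
  have h1 : |u y - u x| ≤ K * dist y x := by
    simpa [Real.dist_eq] using hu.dist_le_mul y x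
  have h2 : dist y x < h := Metric.mem_ball.1 hy
  nlinarith [abs_le.1 h1, K.coe_nonneg]

lemma ballSup_le_ballSup_add (hu : LipschitzWith K u) (hh : 0 < h) (x x' : E) :
    ballSup u h x ≤ ballSup u h x' + K * dist x x' := by
  refine ballSup_le hh fun y hy => ?_
  have hy' : y + (x' - x) ∈ Metric.ball x' h := by
    have : dist (y + (x' - x)) x' = dist y x := by
      rw [dist_eq_norm, dist_eq_norm, show y + (x' - x) - x' = y - x by abel]
    simpa [Metric.mem_ball, this] using Metric.mem_ball.1 hy
  have h1 : u y ≤ u (y + (x' - x)) + K * dist y (y + (x' - x)) := by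
    have := hu.dist_le_mul y (y + (x' - x))
    rw [Real.dist_eq] at this
    nlinarith [abs_le.1 this]
  have h2 : dist y (y + (x' - x)) = dist x x' := by
    rw [dist_eq_norm, dist_eq_norm, show y - (y + (x' - x)) = x - x' by abel]
  have h3 : u (y + (x' - x)) ≤ ballSup u h x' :=
    le_csSup (bddAbove_image_ball hu x') ⟨_, hy', rfl⟩
  calc u y ≤ u (y + (x' - x)) + K * dist y (y + (x' - x)) := h1
    _ ≤ ballSup u h x' + K * dist x x' := by rw [h2]; exact add_le_add_left h3 _

lemma lipschitzWith_ballSup (hu : LipschitzWith K u) (hh : 0 < h) :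
    LipschitzWith K (ballSup u h) := by
  refine LipschitzWith.of_dist_le_mul fun x x' => ?_
  rw [Real.dist_eq, abs_sub_le_iff]
  constructor
  · have := ballSup_le_ballSup_add hu hh x x'
    nlinarith [dist_comm x x']
  · have := ballSup_le_ballSup_add hu hh x' x
    rw [dist_comm x' x] at this
    linarith

lemma ballSup_eq_zero (hu : LipschitzWith K u) (hh : 0 < h) (hu0 : ∀ y, 0 ≤ u y)
    {s : Set E} (huz : ∀ y ∉ s, u y = 0) {x : E} (hx : x ∉ Metric.thickening h s) :
    ballSup u h x = 0 := by
  have hxs : x ∉ s := fun hxs => hx (Metric.self_subset_thickening hh s hxs)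
  refine le_antisymm (ballSup_le hh fun y hy => ?_) ?_
  · by_cases hys : y ∈ s
    · exact absurd (Metric.mem_thickening_iff.2 ⟨y, hys, by
        simpa [dist_comm] using Metric.mem_ball.1 hy⟩) hx
    · exact (huz y hys).le
  · rw [← huz x hxs]
    exact le_ballSup hu hh x

lemma thickening_superlevel_subset (hu : LipschitzWith K u) (hh : 0 < h) (t : ℝ) :
    Metric.thickening h {y | t < u y} ⊆ {x | t < ballSup u h x} := by
  intro x hx
  obtain ⟨y, hy, hd⟩ := Metric.mem_thickening_iff.1 hx
  have hyb : y ∈ Metric.ball x h := by simpa [Metric.mem_ball, dist_comm] using hd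
  exact lt_of_lt_of_le hy (le_csSup (bddAbove_image_ball hu x) ⟨y, hyb, rfl⟩)

end BallSup

/-- Transfer a real liminf along `𝓝[>] 0` to an `ℝ≥0∞` liminf along a sequence. -/
lemma ofReal_mul_liminf_le {φ : ℝ → ℝ} (hφ : ∀ h ∈ Ioi (0:ℝ), 0 ≤ φ h) {c : ℝ} (hc : 0 < c)
    {hk : ℕ → ℝ} (hhk : Tendsto hk atTop (𝓝[>] 0)) :
    ENNReal.ofReal (c * liminf φ (𝓝[>] 0)) ≤
      liminf (fun k => ENNReal.ofReal (c * φ (hk k))) atTop := by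
  rw [liminf_eq]
  set S : Set ℝ := {a | ∀ᶠ h in 𝓝[>] (0:ℝ), a ≤ φ h} with hS
  by_cases hbdd : BddAbove S
  · have hne : S.Nonempty := ⟨0, (eventually_mem_nhdsWithin).mono hφ⟩
    have key : ∀ a ∈ S, ENNReal.ofReal (c * a) ≤
        liminf (fun k => ENNReal.ofReal (c * φ (hk k))) atTop := by
      intro a ha
      refine le_liminf_of_le (by isBoundedDefault) ?_
      filter_upwards [hhk.eventually ha] with k hk'
      exact ENNReal.ofReal_le_ofReal (mul_le_mul_of_nonneg_left hk' hc.le)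
    refine ENNReal.le_of_forall_pos_le_add fun ε hε _ => ?_
    obtain ⟨a, ha, hlt⟩ := exists_lt_of_lt_csSup hne
      (show sSup S - ε / c < sSup S by
        have : (0:ℝ) < ε / c := div_pos (by exact_mod_cast hε) hc
        linarith)
    have h1 : c * sSup S ≤ c * a + ε := by
      have : sSup S < a + ε / c := by linarith
      have h2 := mul_lt_mul_of_pos_left this hc
      rw [mul_add] at h2
      have : c * (ε / c) = ε := by field_simp
      linarith
    calc ENNReal.ofReal (c * sSup S) ≤ ENNReal.ofReal (c * a + ε) :=
          ENNReal.ofReal_le_ofReal h1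
      _ ≤ ENNReal.ofReal (c * a) + ENNReal.ofReal ε := ENNReal.ofReal_add_le
      _ ≤ liminf (fun k => ENNReal.ofReal (c * φ (hk k))) atTop + ε := by
          gcongr
          · exact key a ha
          · simp
  · rw [Real.sSup_of_not_bddAbove hbdd]
    simp

/-- If the fundamental function of an r.i. space `X(ℝⁿ)` satisfies the
isoperimetric estimate `φ_X(m(A)) ≤ c·m⁺(A)` for all Borel sets of finite measure, then
for every `f ∈ Lip₀(ℝⁿ)` the Lorentz-norm inequality
`∫₀^∞ φ_X(m_f(t)) dt ≤ c ∫ |∇f| dx` holds. -/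
theorem isoperimetry_implies_lorentz_sobolev
    (n : ℕ) (hn : 1 ≤ n) (X : RINorm (volume.restrict (Ioi (0:ℝ))))
    (c : ℝ) (hc : 0 < c)
    (hiso : ∀ A : Set (EuclideanSpace ℝ (Fin n)), MeasurableSet A → volume A < ⊤ →
      X.fund ((volume A).toReal) ≤ ENNReal.ofReal (c * minkContent volume A)) :
    ∀ f : EuclideanSpace ℝ (Fin n) → ℝ, (∃ K, LipschitzWith K f) → HasCompactSupport f →
      ∫⁻ t in Ioi (0:ℝ), X.fund (distrib volume f t) ≤
        ENNReal.ofReal (c * ∫ x, ‖fderiv ℝ f x‖) := by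
  intro f hf hsupp
  obtain ⟨K, hK⟩ := hf
  have hu : LipschitzWith K (fun x : EuclideanSpace ℝ (Fin n) => |f x|) := by
    have h1 := (lipschitzWith_one_norm (E := ℝ)).comp hK
    rw [one_mul] at h1
    simpa [Real.norm_eq_abs, Function.comp_def] using h1
  set u : EuclideanSpace ℝ (Fin n) → ℝ := fun x => |f x| with hu_def
  have hu0 : ∀ x, 0 ≤ u x := fun x => abs_nonneg _
  have huz : ∀ x, x ∉ tsupport f → u x = 0 := fun x hx => by
    simp [hu_def, image_eq_zero_of_notMem_tsupport hx]
  obtain ⟨C, hC⟩ := hsupp.exists_bound_of_continuous hK.continuous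
  have hCu : ∀ x, u x ≤ C := fun x => by
    simpa [hu_def, Real.norm_eq_abs] using hC x
  have hScl : IsClosed (tsupport f) := isClosed_tsupport f
  have hScomp : IsCompact (tsupport f) := hsupp
  have hSfin : volume (tsupport f) ≠ ⊤ := hScomp.measure_lt_top.ne
  set hk : ℕ → ℝ := fun k => 1 / ((k : ℝ) + 1) with hk_def
  have hk_pos : ∀ k, 0 < hk k := fun k => by positivity
  have hk_le : ∀ k, hk k ≤ 1 := fun k => by
    rw [hk_def, div_le_one (by positivity)]
    simp
  have hk_tendsto : Tendsto hk atTop (𝓝[>] 0) :=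
    tendsto_nhdsWithin_of_tendsto_nhds_of_eventually_within _
      tendsto_one_div_add_atTop_nhds_zero_nat (Eventually.of_forall fun k => hk_pos k)
  set v : ℕ → EuclideanSpace ℝ (Fin n) → ℝ := fun k => ballSup u (hk k) with hv_def
  have hv_lip : ∀ k, LipschitzWith K (v k) := fun k => lipschitzWith_ballSup hu (hk_pos k)
  have huv : ∀ k x, u x ≤ v k x := fun k x => le_ballSup hu (hk_pos k) x
  have hvC : ∀ k x, v k x ≤ C := fun k x => ballSup_le (hk_pos k) fun y _ => hCu y
  have hv_sub_le : ∀ k x, v k x - u x ≤ K * hk k := fun k x =>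
    ballSup_sub_le hu (hk_pos k) x
  have hv_zero : ∀ k x, x ∉ Metric.cthickening 1 (tsupport f) → v k x = 0 := by
    intro k x hx
    refine ballSup_eq_zero hu (hk_pos k) hu0 huz fun hmem => ?_
    exact hx (Metric.thickening_subset_cthickening_of_le (hk_le k) _ hmem)
  have hSsubT : tsupport f ⊆ Metric.cthickening 1 (tsupport f) :=
    Metric.self_subset_cthickening _
  have hTmeas : MeasurableSet (Metric.cthickening 1 (tsupport f)) :=
    Metric.isClosed_cthickening.measurableSet
  have cthick_fin : ∀ h : ℝ, volume (Metric.cthickening h (tsupport f)) ≠ ⊤ := fun h =>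
    (Bornology.IsBounded.measure_lt_top (hScomp.isBounded.cthickening)).ne
  have hA_open : ∀ t : ℝ, IsOpen {x | t < u x} := fun t =>
    isOpen_lt continuous_const hu.continuous
  have hA_sub : ∀ t : ℝ, 0 < t → {x | t < u x} ⊆ tsupport f := by
    intro t ht x hx
    have hfx : f x ≠ 0 := by
      intro h0
      have hx' : t < u x := hx
      rw [hu_def] at hx'
      simp only [h0, abs_zero] at hx'
      linarith
    exact subset_tsupport f (by simpa [Function.mem_support] using hfx)
  have hA_fin : ∀ t : ℝ, 0 < t → volume {x | t < u x} ≠ ⊤ := fun t ht =>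
    ne_top_of_le_ne_top hSfin (measure_mono (hA_sub t ht))
  have hB_sub : ∀ k (t : ℝ), 0 < t → {x | t < v k x} ⊆ Metric.cthickening 1 (tsupport f) := by
    intro k t ht x hx
    by_contra hxT
    have hvz : v k x = 0 := hv_zero k x hxT
    have hx' : t < v k x := hx
    rw [hvz] at hx'
    linarith
  have hB_fin : ∀ k (t : ℝ), 0 < t → volume {x | t < v k x} ≠ ⊤ := fun k t ht =>
    ne_top_of_le_ne_top (cthick_fin 1) (measure_mono (hB_sub k t ht))
  have hAB : ∀ k (t : ℝ), volume {x | t < u x} ≤ volume {x | t < v k x} := fun k t =>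
    measure_mono fun x hx => lt_of_lt_of_le hx (huv k x)
  have hmeasA : Measurable fun t : ℝ => volume {x | t < u x} := by
    have hanti : Antitone fun t : ℝ => volume {x | t < u x} := fun t t' h =>
      measure_mono fun x hx => lt_of_le_of_lt h hx
    exact hanti.measurable
  have hmeasB : ∀ k, Measurable fun t : ℝ => volume {x | t < v k x} := by
    intro k
    have hanti : Antitone fun t : ℝ => volume {x | t < v k x} := fun t t' h =>
      measure_mono fun x hx => lt_of_le_of_lt h hx
    exact hanti.measurable
  have layer_u : ∫⁻ t in Ioi (0:ℝ), volume {x | t < u x} = ∫⁻ x, ENNReal.ofReal (u x) :=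
    (lintegral_eq_lintegral_meas_lt volume (Eventually.of_forall hu0)
      hu.continuous.measurable.aemeasurable).symm
  have layer_v : ∀ k, ∫⁻ t in Ioi (0:ℝ), volume {x | t < v k x} =
      ∫⁻ x, ENNReal.ofReal (v k x) := fun k =>
    (lintegral_eq_lintegral_meas_lt volume
      (Eventually.of_forall fun x => (hu0 x).trans (huv k x))
      (hv_lip k).continuous.measurable.aemeasurable).symm
  have int_u_fin : ∫⁻ x, ENNReal.ofReal (u x) ≠ ⊤ := by
    have hb : ∀ x, ENNReal.ofReal (u x) ≤
        (tsupport f).indicator (fun _ => ENNReal.ofReal C) x := by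
      intro x
      by_cases hx : x ∈ tsupport f
      · simpa [Set.indicator_of_mem hx] using ENNReal.ofReal_le_ofReal (hCu x)
      · simp [Set.indicator_of_notMem hx, huz x hx]
    refine ne_top_of_le_ne_top ?_ (lintegral_mono hb)
    rw [lintegral_indicator hScl.measurableSet, setLIntegral_const]
    exact ENNReal.mul_ne_top ENNReal.ofReal_ne_top hSfin
  have hkne0 : ∀ k, ENNReal.ofReal (hk k) ≠ 0 := fun k => by
    simp [ENNReal.ofReal_eq_zero, not_le, hk_pos k]
  have hinv_ne_top : ∀ k, (ENNReal.ofReal (hk k))⁻¹ ≠ ⊤ := fun k =>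
    ENNReal.inv_ne_top.2 (hkne0 k)
  have hcoef_ne_top : ∀ k, ENNReal.ofReal c * (ENNReal.ofReal (hk k))⁻¹ ≠ ⊤ := fun k =>
    ENNReal.mul_ne_top ENNReal.ofReal_ne_top (hinv_ne_top k)
  -- Step A
  have stepA : ∀ t : ℝ, 0 < t → X.fund (distrib volume f t) ≤
      liminf (fun k => ENNReal.ofReal (c * (((volume {x | t < v k x}).toReal -
        (volume {x | t < u x}).toReal) / hk k))) atTop := by
    intro t ht
    have h1 : X.fund (distrib volume f t) ≤
        ENNReal.ofReal (c * minkContent volume {x | t < u x}) :=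
      hiso {x | t < u x} (hA_open t).measurableSet (lt_top_iff_ne_top.2 (hA_fin t ht))
    refine h1.trans ?_
    have thick_fin : ∀ h : ℝ, volume (Metric.thickening h {x | t < u x}) ≠ ⊤ := by
      intro h
      refine ne_top_of_le_ne_top (cthick_fin h) (measure_mono ?_)
      exact (Metric.thickening_subset_of_subset h (hA_sub t ht)).trans
        (Metric.thickening_subset_cthickening h _)
    have h2 : ENNReal.ofReal (c * minkContent volume {x | t < u x}) ≤
        liminf (fun k => ENNReal.ofReal (c *
          (((volume (Metric.thickening (hk k) {x | t < u x})).toReal -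
            (volume {x | t < u x}).toReal) / hk k))) atTop := by
      refine ofReal_mul_liminf_le ?_ hc hk_tendsto
      intro h hh
      have hsub : {x | t < u x} ⊆ Metric.thickening h {x | t < u x} :=
        Metric.self_subset_thickening hh _
      have hmono := ENNReal.toReal_mono (thick_fin h) (measure_mono hsub)
      have hh' : (0:ℝ) < h := hh
      have : (0:ℝ) ≤ (volume (Metric.thickening h {x | t < u x})).toReal -
          (volume {x | t < u x}).toReal := sub_nonneg.2 hmono
      positivity
    refine h2.trans (liminf_le_liminf (Eventually.of_forall fun k => ?_))
    refine ENNReal.ofReal_le_ofReal ?_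
    have hmono : (volume (Metric.thickening (hk k) {x | t < u x})).toReal ≤
        (volume {x | t < v k x}).toReal :=
      ENNReal.toReal_mono (hB_fin k t ht)
        (measure_mono (thickening_superlevel_subset hu (hk_pos k) t))
    have hkp := hk_pos k
    gcongr
  -- Step C : the t-integral equals an x-integral
  have stepC : ∀ k, (∫⁻ t in Ioi (0:ℝ), ENNReal.ofReal (c *
        (((volume {x | t < v k x}).toReal - (volume {x | t < u x}).toReal) / hk k))) =
      ∫⁻ x, ENNReal.ofReal c * (ENNReal.ofReal (hk k))⁻¹ * ENNReal.ofReal (v k x - u x) := by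
    intro k
    have hpt : ∀ t ∈ Ioi (0:ℝ), ENNReal.ofReal (c *
        (((volume {x | t < v k x}).toReal - (volume {x | t < u x}).toReal) / hk k)) =
        (ENNReal.ofReal c * (ENNReal.ofReal (hk k))⁻¹) *
          (volume {x | t < v k x} - volume {x | t < u x}) := by
      intro t ht
      have ht' : (0:ℝ) < t := ht
      have hfinB : volume {x | t < v k x} ≠ ⊤ := hB_fin k t ht'
      have hle := hAB k t
      rw [← ENNReal.toReal_sub_of_le hle hfinB,
        ENNReal.ofReal_mul hc.le, ENNReal.ofReal_div_of_pos (hk_pos k),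
        ENNReal.ofReal_toReal (ENNReal.sub_ne_top hfinB), div_eq_mul_inv]
      ring
    rw [setLIntegral_congr_fun measurableSet_Ioi hpt]
    rw [lintegral_const_mul' _ _ (hcoef_ne_top k)]
    have hsub_int : (∫⁻ t in Ioi (0:ℝ), (volume {x | t < v k x} - volume {x | t < u x})) =
        (∫⁻ x, ENNReal.ofReal (v k x)) - ∫⁻ x, ENNReal.ofReal (u x) := by
      rw [lintegral_sub hmeasA (by rw [layer_u]; exact int_u_fin)
        (Eventually.of_forall fun t => hAB k t), layer_u, layer_v k]
    rw [hsub_int]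
    have hx_int : (∫⁻ x, ENNReal.ofReal (v k x)) - (∫⁻ x, ENNReal.ofReal (u x)) =
        ∫⁻ x, ENNReal.ofReal (v k x - u x) := by
      rw [← lintegral_sub hu.continuous.measurable.ennreal_ofReal int_u_fin
        (Eventually.of_forall fun x => ENNReal.ofReal_le_ofReal (huv k x))]
      exact lintegral_congr fun x => (ENNReal.ofReal_sub _ (hu0 x)).symm
    rw [hx_int, ← lintegral_const_mul' _ _ (hcoef_ne_top k)]
  -- measurability of the integrands
  have hHmeas : ∀ k, Measurable fun t : ℝ => ENNReal.ofReal (c *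
      (((volume {x | t < v k x}).toReal - (volume {x | t < u x}).toReal) / hk k)) := by
    intro k
    exact ((((hmeasB k).ennreal_toReal.sub hmeasA.ennreal_toReal).div_const
      (hk k)).const_mul c).ennreal_ofReal
  have hFmeas : ∀ k, Measurable fun x => ENNReal.ofReal c * (ENNReal.ofReal (hk k))⁻¹ *
      ENNReal.ofReal (v k x - u x) := by
    intro k
    exact (((hv_lip k).continuous.sub hu.continuous).measurable.ennreal_ofReal).const_mul _
  -- the dominating function for reverse Fatou
  have hbound : ∀ k, (fun x => ENNReal.ofReal c * (ENNReal.ofReal (hk k))⁻¹ *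
      ENNReal.ofReal (v k x - u x)) ≤ᵐ[volume]
      fun x => ENNReal.ofReal c * (Metric.cthickening 1 (tsupport f)).indicator
        (fun _ => (K : ℝ≥0∞)) x := by
    intro k
    refine Eventually.of_forall fun x => ?_
    dsimp only
    by_cases hx : x ∈ Metric.cthickening 1 (tsupport f)
    · rw [Set.indicator_of_mem hx]
      rw [mul_assoc]
      refine mul_le_mul_right ?_ _
      calc (ENNReal.ofReal (hk k))⁻¹ * ENNReal.ofReal (v k x - u x)
          ≤ (ENNReal.ofReal (hk k))⁻¹ * ENNReal.ofReal ((K : ℝ) * hk k) := by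
            gcongr
            exact hv_sub_le k x
        _ = (K : ℝ≥0∞) * ((ENNReal.ofReal (hk k))⁻¹ * ENNReal.ofReal (hk k)) := by
            rw [ENNReal.ofReal_mul K.coe_nonneg, ENNReal.ofReal_coe_nnreal]
            ring
        _ = (K : ℝ≥0∞) := by
            rw [ENNReal.inv_mul_cancel (hkne0 k) ENNReal.ofReal_ne_top, mul_one]
    · have hxS : x ∉ tsupport f := fun h => hx (hSsubT h)
      rw [Set.indicator_of_notMem hx, hv_zero k x hx, huz x hxS]
      simp
  have hbound_fin : (∫⁻ x, ENNReal.ofReal c * (Metric.cthickening 1 (tsupport f)).indicator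
      (fun _ => (K : ℝ≥0∞)) x) ≠ ⊤ := by
    rw [lintegral_const_mul' _ _ ENNReal.ofReal_ne_top,
      lintegral_indicator hTmeas, setLIntegral_const]
    exact ENNReal.mul_ne_top ENNReal.ofReal_ne_top
      (ENNReal.mul_ne_top ENNReal.coe_ne_top (cthick_fin 1))
  -- integrability of the gradient
  have hgrad_meas : Measurable fun x : EuclideanSpace ℝ (Fin n) => ‖fderiv ℝ f x‖ :=
    (measurable_fderiv ℝ f).norm
  have hgrad_le : ∀ x, ‖fderiv ℝ f x‖ ≤
      (tsupport f).indicator (fun _ => (K : ℝ)) x := by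
    intro x
    by_cases hx : x ∈ tsupport f
    · rw [Set.indicator_of_mem hx]
      exact norm_fderiv_le_of_lipschitz ℝ hK
    · rw [Set.indicator_of_notMem hx]
      have hf0 : f =ᶠ[𝓝 x] 0 := by
        have : IsOpen (tsupport f)ᶜ := hScl.isOpen_compl
        filter_upwards [this.mem_nhds hx] with y hy
        exact image_eq_zero_of_notMem_tsupport hy
      rw [hf0.fderiv_eq]
      have : fderiv ℝ (0 : EuclideanSpace ℝ (Fin n) → ℝ) x = 0 := fderiv_const_apply 0
      rw [this]
      simp
  have hgrad_int : Integrable (fun x : EuclideanSpace ℝ (Fin n) => ‖fderiv ℝ f x‖) := by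
    refine Integrable.mono' (g := (tsupport f).indicator fun _ => (K : ℝ)) ?_
      hgrad_meas.aestronglyMeasurable (Eventually.of_forall fun x => ?_)
    · rw [integrable_indicator_iff hScl.measurableSet]
      exact integrableOn_const hScomp.measure_lt_top.ne
    · rw [Real.norm_eq_abs, abs_of_nonneg (norm_nonneg _)]
      exact hgrad_le x
  -- Step D : pointwise limsup bound
  have ptwise : ∀ᵐ x, limsup (fun k => ENNReal.ofReal c * (ENNReal.ofReal (hk k))⁻¹ *
      ENNReal.ofReal (v k x - u x)) atTop ≤
      ENNReal.ofReal c * ENNReal.ofReal ‖fderiv ℝ f x‖ := by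
    filter_upwards [hK.ae_differentiableAt (μ := volume)] with x hx
    have hD' : HasFDerivAt f (fderiv ℝ f x) x := hx.hasFDerivAt
    have heq : (fun k => ENNReal.ofReal c * (ENNReal.ofReal (hk k))⁻¹ *
        ENNReal.ofReal (v k x - u x)) = fun k => ENNReal.ofReal c *
        ((ENNReal.ofReal (hk k))⁻¹ * ENNReal.ofReal (v k x - u x)) := by
      funext k; ring
    rw [heq, ENNReal.limsup_const_mul_of_ne_top ENNReal.ofReal_ne_top]
    refine mul_le_mul_right ?_ _
    refine ENNReal.le_of_forall_pos_le_add fun ε hε _ => ?_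
    have hεpos : (0:ℝ) < ε := hε
    have hlo := Asymptotics.isLittleO_iff.1 hD'.isLittleO hεpos
    rw [Metric.eventually_nhds_iff] at hlo
    obtain ⟨δ, hδ, hsmall⟩ := hlo
    have hδev : ∀ᶠ k in atTop, hk k < δ :=
      (hk_tendsto.mono_right nhdsWithin_le_nhds).eventually (eventually_lt_nhds hδ)
    have hev : ∀ᶠ k in atTop, (ENNReal.ofReal (hk k))⁻¹ * ENNReal.ofReal (v k x - u x) ≤
        ENNReal.ofReal (‖fderiv ℝ f x‖ + ε) := by
      filter_upwards [hδev] with k hkδ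
      have key : v k x - u x ≤ (‖fderiv ℝ f x‖ + ε) * hk k := by
        rw [sub_le_iff_le_add]
        refine ballSup_le (hk_pos k) fun y hy => ?_
        have hyx : dist y x < δ := lt_trans (Metric.mem_ball.1 hy) hkδ
        have h1 : ‖f y - f x - (fderiv ℝ f x) (y - x)‖ ≤ ε * ‖y - x‖ := hsmall hyx
        have h2 : |f y| - |f x| ≤ |f y - f x| := by
          have := abs_sub_abs_le_abs_sub (f y) (f x); linarith
        have h4 : ‖(fderiv ℝ f x) (y - x)‖ ≤ ‖fderiv ℝ f x‖ * ‖y - x‖ :=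
          (fderiv ℝ f x).le_opNorm _
        have h5 : |f y - f x| ≤ ‖f y - f x - (fderiv ℝ f x) (y - x)‖ +
            ‖(fderiv ℝ f x) (y - x)‖ := by
          have hna := norm_add_le (f y - f x - (fderiv ℝ f x) (y - x))
            ((fderiv ℝ f x) (y - x))
          rw [sub_add_cancel] at hna
          rwa [Real.norm_eq_abs] at hna
        have h6 : ‖y - x‖ ≤ hk k := by
          rw [← dist_eq_norm]
          exact (Metric.mem_ball.1 hy).le
        have h7 : (0:ℝ) ≤ ‖fderiv ℝ f x‖ + ε := by positivity
        have h8 : u y ≤ u x + (‖fderiv ℝ f x‖ + ε) * ‖y - x‖ := by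
          show |f y| ≤ |f x| + (‖fderiv ℝ f x‖ + ε) * ‖y - x‖
          nlinarith
        refine h8.trans ?_
        have := mul_le_mul_of_nonneg_left h6 h7
        linarith
      calc (ENNReal.ofReal (hk k))⁻¹ * ENNReal.ofReal (v k x - u x)
          ≤ (ENNReal.ofReal (hk k))⁻¹ *
              ENNReal.ofReal ((‖fderiv ℝ f x‖ + ε) * hk k) :=
            mul_le_mul_right (ENNReal.ofReal_le_ofReal key) _
        _ = ENNReal.ofReal (‖fderiv ℝ f x‖ + ε) *
              ((ENNReal.ofReal (hk k))⁻¹ * ENNReal.ofReal (hk k)) := by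
            rw [ENNReal.ofReal_mul (by positivity)]
            ring
        _ = ENNReal.ofReal (‖fderiv ℝ f x‖ + ε) := by
            rw [ENNReal.inv_mul_cancel (hkne0 k) ENNReal.ofReal_ne_top, mul_one]
    calc limsup (fun k => (ENNReal.ofReal (hk k))⁻¹ * ENNReal.ofReal (v k x - u x)) atTop
        ≤ ENNReal.ofReal (‖fderiv ℝ f x‖ + ε) := limsup_le_of_le (by isBoundedDefault) hev
      _ ≤ ENNReal.ofReal ‖fderiv ℝ f x‖ + ENNReal.ofReal (ε : ℝ) := ENNReal.ofReal_add_le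
      _ = ENNReal.ofReal ‖fderiv ℝ f x‖ + (ε : ℝ≥0∞) := by
          rw [ENNReal.ofReal_coe_nnreal]
  -- main chain
  calc ∫⁻ t in Ioi (0:ℝ), X.fund (distrib volume f t)
      ≤ ∫⁻ t in Ioi (0:ℝ), liminf (fun k => ENNReal.ofReal (c *
          (((volume {x | t < v k x}).toReal - (volume {x | t < u x}).toReal) / hk k))) atTop := by
        refine lintegral_mono_ae ?_
        filter_upwards [ae_restrict_mem measurableSet_Ioi] with t ht
        exact stepA t ht
    _ ≤ liminf (fun k => ∫⁻ t in Ioi (0:ℝ), ENNReal.ofReal (c *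
          (((volume {x | t < v k x}).toReal - (volume {x | t < u x}).toReal) / hk k))) atTop :=
        lintegral_liminf_le hHmeas
    _ = liminf (fun k => ∫⁻ x, ENNReal.ofReal c * (ENNReal.ofReal (hk k))⁻¹ *
          ENNReal.ofReal (v k x - u x)) atTop := by
        exact congrArg (fun g => liminf g atTop) (funext stepC)
    _ ≤ limsup (fun k => ∫⁻ x, ENNReal.ofReal c * (ENNReal.ofReal (hk k))⁻¹ *
          ENNReal.ofReal (v k x - u x)) atTop := liminf_le_limsup
    _ ≤ ∫⁻ x, limsup (fun k => ENNReal.ofReal c * (ENNReal.ofReal (hk k))⁻¹ *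
          ENNReal.ofReal (v k x - u x)) atTop :=
        limsup_lintegral_le _ hFmeas hbound hbound_fin
    _ ≤ ∫⁻ x, ENNReal.ofReal c * ENNReal.ofReal ‖fderiv ℝ f x‖ := lintegral_mono_ae ptwise
    _ = ENNReal.ofReal c * ∫⁻ x, ENNReal.ofReal ‖fderiv ℝ f x‖ :=
        lintegral_const_mul' _ _ ENNReal.ofReal_ne_top
    _ = ENNReal.ofReal c * ENNReal.ofReal (∫ x, ‖fderiv ℝ f x‖) := by
        rw [ofReal_integral_eq_lintegral_ofReal hgrad_int
          (Eventually.of_forall fun x => norm_nonneg _)]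
    _ = ENNReal.ofReal (c * ∫ x, ‖fderiv ℝ f x‖) := (ENNReal.ofReal_mul hc.le).symm
end
end

section
/- Let f ∈ Lip₀(ℝⁿ) and t > 0, and define the truncation f_{f*(t)}(x) = |f(x)| − f*(t) if |f(x)| > f*(t), and f_{f*(t)}(x) = 0 if |f(x)| ≤ f*(t). Then f_{f*(t)} ∈ Lip₀(ℝⁿ) and ∫_{ℝⁿ} |∇(f_{f*(t)})(x)| dx ≤ ∫₀ᵗ |∇f|*(s) ds. -/
open MeasureTheory Set Filter Topology
open scoped ENNReal NNReal

noncomputable section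

section AuxLemmas

variable {α : Type*} [MeasurableSpace α]

lemma rearr_nonneg_s16 (μ : Measure α) (h : α → ℝ) (s : ℝ) : 0 ≤ rearr μ h s := by
  rcases eq_empty_or_nonempty {t : ℝ | 0 ≤ t ∧ distrib μ h t ≤ s} with he | hne
  · simp [rearr, he, Real.sInf_empty]
  · exact le_csInf hne fun b hb => hb.1

/-- Hardy–Littlewood type inequality: the integral of a nonnegative bounded function `h`
vanishing outside a finite-measure set, over a set `E` of measure at most `t`, is bounded
by the integral of its decreasing rearrangement over `(0, t)`. -/
lemma integral_le_integral_rearr (μ : Measure α)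
    (h : α → ℝ) (hmeas : Measurable h) (hnn : ∀ x, 0 ≤ h x) (K : ℝ) (hK0 : 0 ≤ K)
    (hK : ∀ x, h x ≤ K)
    (S : Set α) (hSfin : μ S ≠ ∞) (hSupp : ∀ x, x ∉ S → h x = 0)
    (E : Set α) (hEm : MeasurableSet E) (t : ℝ) (ht : 0 < t)
    (hEt : μ E ≤ ENNReal.ofReal t) :
    ∫ x in E, h x ∂μ ≤ ∫ s in (0:ℝ)..t, rearr μ h s := by
  have habs : ∀ x, |h x| = h x := fun x => abs_of_nonneg (hnn x)
  have hdist : ∀ u : ℝ, distrib μ h u = (μ {x | u < h x}).toReal := by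
    intro u
    unfold distrib
    have hset : {x | u < |h x|} = {x | u < h x} := by
      ext x; simp [habs x]
    rw [hset]
  have hsubS : ∀ u : ℝ, 0 ≤ u → {x | u < h x} ⊆ S := by
    intro u hu x hx
    by_contra hxS
    have := hSupp x hxS
    simp only [mem_setOf_eq, this] at hx
    exact absurd hx (not_lt.2 hu)
  have hfin : ∀ u : ℝ, 0 ≤ u → μ {x | u < h x} ≠ ∞ :=
    fun u hu => ((measure_mono (hsubS u hu)).trans_lt hSfin.lt_top).ne
  have hKmem : ∀ s : ℝ, 0 ≤ s → K ∈ {t' : ℝ | 0 ≤ t' ∧ distrib μ h t' ≤ s} := by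
    intro s hs
    refine ⟨hK0, ?_⟩
    rw [hdist]
    have : {x | K < h x} = (∅ : Set α) := by
      ext x; simp only [mem_setOf_eq, mem_empty_iff_false, iff_false, not_lt]; exact hK x
    rw [this]
    simpa using hs
  have hbdd : ∀ s : ℝ, BddBelow {t' : ℝ | 0 ≤ t' ∧ distrib μ h t' ≤ s} :=
    fun s => ⟨0, fun b hb => hb.1⟩
  have hrearr_le_K : ∀ s : ℝ, 0 ≤ s → rearr μ h s ≤ K :=
    fun s hs => csInf_le (hbdd s) (hKmem s hs)
  have key1 : ∀ u s : ℝ, 0 < u → 0 ≤ s → s < distrib μ h u → u ≤ rearr μ h s := by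
    intro u s hu hs hsd
    refine le_csInf ⟨K, hKmem s hs⟩ ?_
    rintro b ⟨hb0, hbd⟩
    by_contra hub
    push_neg at hub
    have hsub : {x | u < h x} ⊆ {x | b < h x} :=
      fun x hx => lt_trans hub hx
    have : distrib μ h u ≤ distrib μ h b := by
      rw [hdist, hdist]
      exact ENNReal.toReal_mono (hfin b hb0) (measure_mono hsub)
    exact absurd (hsd.trans_le (this.trans hbd)) (lt_irrefl s)
  have hanti : AntitoneOn (rearr μ h) (Set.Ioo 0 t) := by
    intro s1 hs1 s2 _ h12
    exact csInf_le_csInf (hbdd s2) ⟨K, hKmem s1 hs1.1.le⟩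
      (fun b hb => ⟨hb.1, hb.2.trans h12⟩)
  have hmble2 : AEMeasurable (rearr μ h) (volume.restrict (Set.Ioo 0 t)) :=
    aemeasurable_restrict_of_antitoneOn measurableSet_Ioo hanti
  -- layer cake for both sides
  have hL1 : ∫⁻ x in E, ENNReal.ofReal (h x) ∂μ
      = ∫⁻ u in Set.Ioi (0:ℝ), (μ.restrict E) {x | u < h x} :=
    lintegral_eq_lintegral_meas_lt (μ.restrict E) (Filter.Eventually.of_forall hnn)
      hmeas.aemeasurable
  have hL2 : ∫⁻ s in Set.Ioo (0:ℝ) t, ENNReal.ofReal (rearr μ h s)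
      = ∫⁻ u in Set.Ioi (0:ℝ), (volume.restrict (Set.Ioo (0:ℝ) t)) {s | u ≤ rearr μ h s} :=
    lintegral_eq_lintegral_meas_le (volume.restrict (Set.Ioo (0:ℝ) t))
      (Filter.Eventually.of_forall (fun s => rearr_nonneg_s16 μ h s)) hmble2
  have hcomp : ∀ u : ℝ, u ∈ Set.Ioi (0:ℝ) →
      (μ.restrict E) {x | u < h x}
        ≤ (volume.restrict (Set.Ioo (0:ℝ) t)) {s | u ≤ rearr μ h s} := by
    intro u hu
    rw [Set.mem_Ioi] at hu
    have hms : MeasurableSet {x | u < h x} := measurableSet_lt measurable_const hmeas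
    rw [Measure.restrict_apply hms]
    set d : ℝ := distrib μ h u with hd
    have hd0 : 0 ≤ d := ENNReal.toReal_nonneg
    have h1 : μ ({x | u < h x} ∩ E) ≤ min (ENNReal.ofReal t) (ENNReal.ofReal d) := by
      refine le_min ((measure_mono Set.inter_subset_right).trans hEt) ?_
      rw [hd, hdist, ENNReal.ofReal_toReal (hfin u hu.le)]
      exact measure_mono Set.inter_subset_left
    have h2 : Set.Ioo (0:ℝ) (min t d) ⊆ {s | u ≤ rearr μ h s} ∩ Set.Ioo (0:ℝ) t := by
      intro s hs
      have hst : s < t := lt_of_lt_of_le hs.2 (min_le_left _ _)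
      have hsd : s < d := lt_of_lt_of_le hs.2 (min_le_right _ _)
      exact ⟨key1 u s hu hs.1.le hsd, hs.1, hst⟩
    calc μ ({x | u < h x} ∩ E) ≤ min (ENNReal.ofReal t) (ENNReal.ofReal d) := h1
      _ = ENNReal.ofReal (min t d) := by
          rcases le_total t d with h' | h'
          · rw [min_eq_left (ENNReal.ofReal_le_ofReal h'), min_eq_left h']
          · rw [min_eq_right (ENNReal.ofReal_le_ofReal h'), min_eq_right h']
      _ = volume (Set.Ioo (0:ℝ) (min t d)) := by rw [Real.volume_Ioo, sub_zero]
      _ ≤ volume ({s | u ≤ rearr μ h s} ∩ Set.Ioo (0:ℝ) t) := measure_mono h2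
      _ = (volume.restrict (Set.Ioo (0:ℝ) t)) {s | u ≤ rearr μ h s} :=
          (Measure.restrict_apply' measurableSet_Ioo).symm
  have hchain : ∫⁻ x in E, ENNReal.ofReal (h x) ∂μ
      ≤ ∫⁻ s in Set.Ioo (0:ℝ) t, ENNReal.ofReal (rearr μ h s) := by
    rw [hL1, hL2]
    exact lintegral_mono_ae ((ae_restrict_mem measurableSet_Ioi).mono hcomp)
  have hfin2 : ∫⁻ s in Set.Ioo (0:ℝ) t, ENNReal.ofReal (rearr μ h s) ≠ ∞ := by
    have : ∫⁻ s in Set.Ioo (0:ℝ) t, ENNReal.ofReal (rearr μ h s)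
        ≤ ∫⁻ _ in Set.Ioo (0:ℝ) t, ENNReal.ofReal K := by
      refine lintegral_mono_ae ((ae_restrict_mem measurableSet_Ioo).mono ?_)
      intro s hs
      exact ENNReal.ofReal_le_ofReal (hrearr_le_K s hs.1.le)
    refine (this.trans_lt ?_).ne
    rw [lintegral_const, Measure.restrict_apply MeasurableSet.univ, Set.univ_inter,
      Real.volume_Ioo]
    exact ENNReal.mul_lt_top ENNReal.ofReal_lt_top ENNReal.ofReal_lt_top
  have e1 : ∫ x in E, h x ∂μ = (∫⁻ x in E, ENNReal.ofReal (h x) ∂μ).toReal :=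
    integral_eq_lintegral_of_nonneg_ae (Filter.Eventually.of_forall hnn)
      hmeas.aestronglyMeasurable
  have e2 : ∫ s in (0:ℝ)..t, rearr μ h s
      = (∫⁻ s in Set.Ioo (0:ℝ) t, ENNReal.ofReal (rearr μ h s)).toReal := by
    rw [intervalIntegral.integral_of_le ht.le, MeasureTheory.integral_Ioc_eq_integral_Ioo]
    exact integral_eq_lintegral_of_nonneg_ae
      (Filter.Eventually.of_forall (fun s => rearr_nonneg_s16 μ h s))
      hmble2.aestronglyMeasurable
  rw [e1, e2]
  exact ENNReal.toReal_mono hfin2 hchain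

end AuxLemmas

/-- The truncation `f_{f*(t)} = (|f| - f*(t))₊` of `f ∈ Lip₀(ℝⁿ)`
belongs to `Lip₀(ℝⁿ)` and `∫ |∇(f_{f*(t)})| dx ≤ ∫₀ᵗ |∇f|*(s) ds`. -/
theorem truncation_gradient_estimate
    (n : ℕ) (hn : 1 ≤ n) (f : EuclideanSpace ℝ (Fin n) → ℝ)
    (hfLip : ∃ K, LipschitzWith K f) (hfsupp : HasCompactSupport f) (t : ℝ) (ht : 0 < t) :
    ((∃ K, LipschitzWith K (fun x => max (|f x| - rearr volume f t) 0)) ∧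
      HasCompactSupport (fun x => max (|f x| - rearr volume f t) 0)) ∧
    ∫ x, ‖fderiv ℝ (fun y => max (|f y| - rearr volume f t) 0) x‖ ≤
      ∫ s in (0:ℝ)..t, rearr volume (fun x => ‖fderiv ℝ f x‖) s := by
  classical
  obtain ⟨K, hKf⟩ := hfLip
  have hcontf : Continuous f := hKf.continuous
  set c : ℝ := rearr volume f t with hcdef
  have hc0 : 0 ≤ c := rearr_nonneg_s16 _ _ _
  set g : EuclideanSpace ℝ (Fin n) → ℝ := fun x => max (|f x| - c) 0 with hgdef
  -- Lipschitz continuity of the truncation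
  have htr : LipschitzWith 1 (fun y : ℝ => max (|y| - c) 0) := by
    rw [lipschitzWith_iff_dist_le_mul]
    intro a b
    rw [Real.dist_eq, Real.dist_eq, NNReal.coe_one, one_mul]
    calc |max (|a| - c) 0 - max (|b| - c) 0| ≤ |(|a| - c) - (|b| - c)| :=
        abs_max_sub_max_le_abs _ _ _
      _ ≤ |a - b| := by
        have h1 : (|a| - c) - (|b| - c) = |a| - |b| := by ring
        rw [h1]
        exact abs_abs_sub_abs_le_abs_sub a b
  have hgLip : LipschitzWith (1 * K) g := htr.comp hKf
  -- compact support of the truncation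
  have hsupp_g : Function.support g ⊆ tsupport f := by
    intro x hx
    by_contra hxs
    have hf0 : f x = 0 := image_eq_zero_of_notMem_tsupport hxs
    apply hx
    show max (|f x| - c) 0 = 0
    rw [hf0, abs_zero, zero_sub]
    exact max_eq_right (neg_nonpos.2 hc0)
  have hgsupp : HasCompactSupport g :=
    HasCompactSupport.mono' hfsupp hsupp_g
  refine ⟨⟨⟨1 * K, hgLip⟩, hgsupp⟩, ?_⟩
  -- the gradient modulus
  set h : EuclideanSpace ℝ (Fin n) → ℝ := fun x => ‖fderiv ℝ f x‖ with hhdef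
  have hmeas_h : Measurable h := (measurable_fderiv ℝ f).norm
  have hfd_le : ∀ x, h x ≤ (K : ℝ) := fun x => norm_fderiv_le_of_lipschitz ℝ hKf
  have hgd_le : ∀ x, ‖fderiv ℝ g x‖ ≤ ((1 * K : ℝ≥0) : ℝ) :=
    fun x => norm_fderiv_le_of_lipschitz ℝ hgLip
  have hS : MeasurableSet (tsupport f) := (isClosed_tsupport f).measurableSet
  have hSfin : volume (tsupport f) ≠ ∞ := hfsupp.measure_lt_top.ne
  have hfd0 : ∀ x, x ∉ tsupport f → fderiv ℝ f x = 0 := by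
    intro x hx
    have hev : f =ᶠ[𝓝 x] (fun _ => (0:ℝ)) :=
      eventually_of_mem ((isClosed_tsupport f).isOpen_compl.mem_nhds hx)
        (fun y hy => image_eq_zero_of_notMem_tsupport hy)
    rw [hev.fderiv_eq]
    exact fderiv_const_apply 0
  have hgd0 : ∀ x, x ∉ tsupport f → fderiv ℝ g x = 0 := by
    intro x hx
    have hev : g =ᶠ[𝓝 x] (fun _ => (0:ℝ)) :=
      eventually_of_mem ((isClosed_tsupport f).isOpen_compl.mem_nhds hx)
        (fun y hy => by
          by_contra hgy
          exact hy (hsupp_g hgy))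
    rw [hev.fderiv_eq]
    exact fderiv_const_apply 0
  -- integrability of bounded compactly supported functions
  have hint : ∀ (φ : EuclideanSpace ℝ (Fin n) → ℝ) (C : ℝ), Measurable φ →
      (∀ x, 0 ≤ φ x) → (∀ x, φ x ≤ C) → (∀ x, x ∉ tsupport f → φ x = 0) → Integrable φ := by
    intro φ C hφm hφ0 hφC hφs
    refine Integrable.mono' (g := (tsupport f).indicator fun _ => C) ((integrable_indicator_iff hS).2 ?_) hφm.aestronglyMeasurable ?_
    · exact integrableOn_const hSfin
    · refine Filter.Eventually.of_forall fun x => ?_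
      by_cases hx : x ∈ tsupport f
      · rw [Set.indicator_of_mem hx, Real.norm_eq_abs, abs_of_nonneg (hφ0 x)]
        exact hφC x
      · rw [Set.indicator_of_notMem hx, hφs x hx]
        simp
  have hInt_h : Integrable h :=
    hint h (K : ℝ) hmeas_h (fun x => norm_nonneg _) hfd_le
      (fun x hx => by show ‖fderiv ℝ f x‖ = 0; rw [hfd0 x hx]; simp)
  have hInt_g : Integrable (fun x => ‖fderiv ℝ g x‖) :=
    hint _ ((1 * K : ℝ≥0) : ℝ) ((measurable_fderiv ℝ g).norm) (fun x => norm_nonneg _)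
      hgd_le (fun x hx => by rw [hgd0 x hx]; simp)
  -- the set E and its measure bound
  set E : Set (EuclideanSpace ℝ (Fin n)) := {x | c < |f x|} with hEdef
  have hEopen : IsOpen E := isOpen_lt continuous_const (continuous_abs.comp hcontf)
  have hEm : MeasurableSet E := hEopen.measurableSet
  have hsubT : ∀ a : ℝ, 0 ≤ a → {x | a < |f x|} ⊆ tsupport f := by
    intro a ha x hx
    apply subset_tsupport
    intro h0
    rw [mem_setOf_eq, h0, abs_zero] at hx
    exact absurd hx (not_lt.2 ha)
  obtain ⟨C, hC⟩ := hfsupp.exists_bound_of_continuous hcontf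
  have hAK : max C 0 ∈ {t' : ℝ | 0 ≤ t' ∧ distrib volume f t' ≤ t} := by
    refine ⟨le_max_right _ _, ?_⟩
    unfold distrib
    have hempty : {x | max C 0 < |f x|} = (∅ : Set (EuclideanSpace ℝ (Fin n))) := by
      ext x
      simp only [mem_setOf_eq, mem_empty_iff_false, iff_false, not_lt]
      exact le_max_of_le_left (by simpa [Real.norm_eq_abs] using hC x)
    rw [hempty]
    simpa using ht.le
  have hEt : volume E ≤ ENNReal.ofReal t := by
    have hmon : Monotone (fun m : ℕ => {x | c + 1 / (m + 1 : ℝ) < |f x|}) := by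
      intro a b hab x hx
      refine lt_of_le_of_lt (add_le_add_right ?_ c) hx
      apply one_div_le_one_div_of_le
      · positivity
      · exact_mod_cast add_le_add_left (Nat.cast_le.2 hab) 1
    have hunion : E ⊆ ⋃ m : ℕ, {x | c + 1 / (m + 1 : ℝ) < |f x|} := by
      intro x hx
      obtain ⟨m, hm⟩ := exists_nat_one_div_lt (K := ℝ) (sub_pos.2 hx)
      exact Set.mem_iUnion.2 ⟨m, by simp only [mem_setOf_eq]; linarith⟩
    refine (measure_mono hunion).trans ?_
    rw [(hmon.directed_le).measure_iUnion]
    refine iSup_le fun m => ?_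
    have hpos : (0:ℝ) < 1 / (m + 1 : ℝ) := by positivity
    obtain ⟨a, haA, halt⟩ := Real.lt_sInf_add_pos ⟨_, hAK⟩ hpos
    have halt' : a < c + 1 / (m + 1 : ℝ) := halt
    have hsub : {x | c + 1 / (m + 1 : ℝ) < |f x|} ⊆ {x | a < |f x|} :=
      fun x hx => lt_trans halt' hx
    refine (measure_mono hsub).trans ?_
    have hfinA : volume {x | a < |f x|} ≠ ∞ :=
      ((measure_mono (hsubT a haA.1)).trans_lt hfsupp.measure_lt_top).ne
    calc volume {x | a < |f x|} = ENNReal.ofReal (distrib volume f a) := by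
          rw [distrib, ENNReal.ofReal_toReal hfinA]
      _ ≤ ENNReal.ofReal t := ENNReal.ofReal_le_ofReal haA.2
  -- a.e. pointwise bound on the gradient of the truncation
  have hae : ∀ᵐ x, ‖fderiv ℝ g x‖ ≤ E.indicator h x := by
    filter_upwards [hKf.ae_differentiableAt] with x hdx
    by_cases h1 : c < |f x|
    · rw [Set.indicator_of_mem (show x ∈ E from h1) h]
      rcases lt_abs.mp h1 with hpos | hneg
      · have hmem : {y | c < f y} ∈ 𝓝 x :=
          (isOpen_lt continuous_const hcontf).mem_nhds hpos
        have hev : g =ᶠ[𝓝 x] fun y => f y - c := by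
          filter_upwards [hmem] with y hy
          show max (|f y| - c) 0 = f y - c
          rw [abs_of_nonneg (hc0.trans hy.le)]
          exact max_eq_left (sub_nonneg.2 hy.le)
        show ‖fderiv ℝ g x‖ ≤ ‖fderiv ℝ f x‖
        rw [hev.fderiv_eq, fderiv_sub_const]
      · have hmem : {y | f y < -c} ∈ 𝓝 x :=
          (isOpen_lt hcontf continuous_const).mem_nhds (show f x < -c by linarith)
        have hev : g =ᶠ[𝓝 x] fun y => -f y - c := by
          filter_upwards [hmem] with y hy
          show max (|f y| - c) 0 = -f y - c
          rw [abs_of_neg (hy.trans_le (neg_nonpos.2 hc0))]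
          exact max_eq_left (by linarith)
        show ‖fderiv ℝ g x‖ ≤ ‖fderiv ℝ f x‖
        rw [hev.fderiv_eq, fderiv_sub_const, fderiv_fun_neg, norm_neg]
    · rw [Set.indicator_of_notMem (show x ∉ E from h1) h]
      have hzero : fderiv ℝ g x = 0 := by
        by_cases h2 : |f x| < c
        · have hmem : {y | |f y| < c} ∈ 𝓝 x :=
            (isOpen_lt (continuous_abs.comp hcontf) continuous_const).mem_nhds h2
          have hev : g =ᶠ[𝓝 x] fun _ => (0:ℝ) := by
            filter_upwards [hmem] with y hy
            show max (|f y| - c) 0 = 0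
            exact max_eq_right (sub_nonpos.2 hy.le)
          rw [hev.fderiv_eq]
          exact fderiv_const_apply 0
        · have heq : |f x| = c := le_antisymm (not_lt.1 h1) (not_lt.1 h2)
          have hgx : g x = 0 := by
            show max (|f x| - c) 0 = 0
            rw [heq, sub_self, max_self]
          have hmin : IsLocalMin g x :=
            Filter.Eventually.of_forall fun y => by
              rw [hgx]; exact le_max_right _ _
          exact hmin.fderiv_eq_zero
      rw [hzero]
      simp
  -- conclusion
  calc ∫ x, ‖fderiv ℝ g x‖
      ≤ ∫ x, E.indicator h x := integral_mono_ae hInt_g (hInt_h.indicator hEm) hae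
    _ = ∫ x in E, h x := integral_indicator hEm
    _ ≤ ∫ s in (0:ℝ)..t, rearr volume h s :=
        integral_le_integral_rearr volume h hmeas_h (fun x => norm_nonneg _) (K : ℝ)
          K.coe_nonneg hfd_le (tsupport f) hSfin
          (fun x hx => by show ‖fderiv ℝ f x‖ = 0; rw [hfd0 x hx]; simp)
          E hEm t ht hEt
end
end
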